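/- Suppose k has characteristic p > 0 and deg c < p − 1. Then each of the elements h^p − h, e^p, and f^p of A commutes with each of h, e, and f; in particular these three elements are central in the subalgebra of A generated by h, e, f. -/

import Mathlib

open Polynomial Finset

section aux

variable {k : Type*} [Field k] (p : ℕ) [CharP k p]

lemma aux_powsum (hp : 0 < p) {t : ℕ} (ht : t < p - 1) :
    ∑ j ∈ Finset.range p, ((j : k)) ^ t = 0 := by
  have hprime : p.Prime := (CharP.char_is_prime_or_zero k p).resolve_right (by omega)
  haveI : Fact p.Prime := ⟨hprime⟩
  have h1 : ∑ x : ZMod p, x ^ t = 0 :=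
    FiniteField.sum_pow_lt_card_sub_one (ZMod p) t (by rwa [ZMod.card])
  have h2 : ∑ j ∈ Finset.range p, ((j : ZMod p)) ^ t = ∑ x : ZMod p, x ^ t := by
    refine Finset.sum_nbij' (fun j => ((j : ZMod p))) (fun x => x.val) ?_ ?_ ?_ ?_ ?_
    · intro a _; exact Finset.mem_univ _
    · intro x _; exact Finset.mem_range.2 (ZMod.val_lt x)
    · intro a ha; exact ZMod.val_cast_of_lt (Finset.mem_range.1 ha)
    · intro x _; simp [ZMod.natCast_val, ZMod.cast_id]
    · intro a _; rfl
  have h3 := congrArg (ZMod.castHom (dvd_refl p) k) (h2.trans h1)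
  simpa [map_sum, map_pow] using h3

lemma aux_sum_comp (hp : 0 < p) (c : k[X]) (hdeg : c.degree < (p - 1 : ℕ))
    (u : ℕ → k) (hu : ∀ t, t < p - 1 → ∑ j ∈ Finset.range p, (u j) ^ t = 0) :
    ∑ j ∈ Finset.range p, c.comp (X + C (u j)) = 0 := by
  rcases eq_or_ne c 0 with rfl | hc
  · simp
  have hnd : c.natDegree < p - 1 := (Polynomial.natDegree_lt_iff_degree_lt hc).2 hdeg
  have key : ∀ n, n < p - 1 → ∑ j ∈ Finset.range p, (X + C (u j)) ^ n = (0 : k[X]) := by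
    intro n hn
    have expand : ∀ j, ((X : k[X]) + C (u j)) ^ n
        = ∑ i ∈ Finset.range (n + 1),
            X ^ i * C ((u j) ^ (n - i)) * (n.choose i : k[X]) := by
      intro j
      rw [(Commute.all (X : k[X]) (C (u j))).add_pow]
      refine Finset.sum_congr rfl fun i _ => ?_
      rw [← C_pow]
    rw [Finset.sum_congr rfl fun j _ => expand j, Finset.sum_comm]
    refine Finset.sum_eq_zero fun i _ => ?_
    rw [← Finset.sum_mul, ← Finset.mul_sum, ← map_sum,
      hu (n - i) (lt_of_le_of_lt (Nat.sub_le n i) hn), map_zero, mul_zero, zero_mul]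
  simp_rw [comp_eq_sum_left, Polynomial.sum]
  rw [Finset.sum_comm]
  refine Finset.sum_eq_zero fun n hn => ?_
  rw [← Finset.mul_sum,
    key n (lt_of_le_of_lt (Polynomial.le_natDegree_of_mem_supp n hn) hnd), mul_zero]

end aux

section alg

variable {k : Type*} [Field k] {A : Type*} [Ring A] [Algebra k A]

lemma he_shift {h e : A} (rel1 : h * e - e * h = e) : h * e = e * (h + 1) := by
  rw [mul_add, mul_one, sub_eq_iff_eq_add.mp rel1]; exact add_comm _ _

lemma eh_shift {h e : A} (rel1 : h * e - e * h = e) : e * h = (h - 1) * e := by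
  rw [sub_mul, one_mul, sub_eq_iff_eq_add.mp rel1]; abel

lemma hf_shift {h f : A} (rel2 : h * f - f * h = -f) : h * f = f * (h - 1) := by
  rw [mul_sub, mul_one, sub_eq_iff_eq_add.mp rel2]; abel

lemma fh_shift {h f : A} (rel2 : h * f - f * h = -f) : f * h = (h + 1) * f := by
  rw [add_mul, one_mul, sub_eq_iff_eq_add.mp rel2]; abel

lemma hpow_e {h e : A} (rel1 : h * e - e * h = e) (n : ℕ) :
    h ^ n * e = e * (h + 1) ^ n := by
  induction n with
  | zero => simp
  | succ n ih =>
    calc h ^ (n + 1) * e = h ^ n * (h * e) := by rw [pow_succ, mul_assoc]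
      _ = h ^ n * e * (h + 1) := by rw [he_shift rel1, mul_assoc]
      _ = e * ((h + 1) ^ n * (h + 1)) := by rw [ih, mul_assoc]
      _ = e * (h + 1) ^ (n + 1) := by rw [← pow_succ]

lemma hpow_f {h f : A} (rel2 : h * f - f * h = -f) (n : ℕ) :
    h ^ n * f = f * (h - 1) ^ n := by
  induction n with
  | zero => simp
  | succ n ih =>
    calc h ^ (n + 1) * f = h ^ n * (h * f) := by rw [pow_succ, mul_assoc]
      _ = h ^ n * f * (h - 1) := by rw [hf_shift rel2, mul_assoc]
      _ = f * ((h - 1) ^ n * (h - 1)) := by rw [ih, mul_assoc]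
      _ = f * (h - 1) ^ (n + 1) := by rw [← pow_succ]

lemma aeval_mul_e {h e : A} (rel1 : h * e - e * h = e) (q : k[X]) :
    aeval h q * e = e * aeval (h + 1) q := by
  induction q using Polynomial.induction_on' with
  | add r s hr hs => rw [map_add, add_mul, hr, hs, map_add, mul_add]
  | monomial n a =>
    rw [aeval_monomial, aeval_monomial, mul_assoc, hpow_e rel1, ← mul_assoc,
      Algebra.commutes, mul_assoc]

lemma aeval_mul_f {h f : A} (rel2 : h * f - f * h = -f) (q : k[X]) :
    aeval h q * f = f * aeval (h - 1) q := by
  induction q using Polynomial.induction_on' with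
  | add r s hr hs => rw [map_add, add_mul, hr, hs, map_add, mul_add]
  | monomial n a =>
    rw [aeval_monomial, aeval_monomial, mul_assoc, hpow_f rel2, ← mul_assoc,
      Algebra.commutes, mul_assoc]

lemma e_mul_aeval {h e : A} (rel1 : h * e - e * h = e) (q : k[X]) :
    e * aeval h q = aeval h (q.comp (X - C 1)) * e := by
  rw [aeval_mul_e rel1, aeval_comp]
  have : aeval (h + 1) ((X : k[X]) - C 1) = h := by simp
  rw [this]

lemma f_mul_aeval {h f : A} (rel2 : h * f - f * h = -f) (q : k[X]) :
    f * aeval h q = aeval h (q.comp (X + C 1)) * f := by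
  rw [aeval_mul_f rel2, aeval_comp]
  have : aeval (h - 1) ((X : k[X]) + C 1) = h := by simp
  rw [this]

lemma en_h {h e : A} (rel1 : h * e - e * h = e) (n : ℕ) :
    e ^ n * h = (h - (n : A)) * e ^ n := by
  induction n with
  | zero => simp
  | succ n ih =>
    calc e ^ (n + 1) * h = e ^ n * (e * h) := by rw [pow_succ, mul_assoc]
      _ = e ^ n * ((h - 1) * e) := by rw [eh_shift rel1]
      _ = (e ^ n * h - e ^ n) * e := by noncomm_ring
      _ = ((h - (n : A)) * e ^ n - e ^ n) * e := by rw [ih]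
      _ = (h - ((n + 1 : ℕ) : A)) * e ^ (n + 1) := by push_cast; noncomm_ring

lemma fn_h {h f : A} (rel2 : h * f - f * h = -f) (n : ℕ) :
    f ^ n * h = (h + (n : A)) * f ^ n := by
  induction n with
  | zero => simp
  | succ n ih =>
    calc f ^ (n + 1) * h = f ^ n * (f * h) := by rw [pow_succ, mul_assoc]
      _ = f ^ n * ((h + 1) * f) := by rw [fh_shift rel2]
      _ = (f ^ n * h + f ^ n) * f := by noncomm_ring
      _ = ((h + (n : A)) * f ^ n + f ^ n) * f := by rw [ih]
      _ = (h + ((n + 1 : ℕ) : A)) * f ^ (n + 1) := by push_cast; noncomm_ring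

lemma comm_step {e f a x b : A} (rel : e * f = f * e + a) (hx : e * x = b * e) (n : ℕ)
    (ih : e ^ (n + 1) * f = f * e ^ (n + 1) + x * e ^ n) :
    e ^ (n + 1 + 1) * f = f * e ^ (n + 1 + 1) + (a + b) * e ^ (n + 1) := by
  calc e ^ (n + 1 + 1) * f = e * (e ^ (n + 1) * f) := by rw [pow_succ', mul_assoc]
    _ = e * (f * e ^ (n + 1)) + e * (x * e ^ n) := by rw [ih, mul_add]
    _ = (f * e + a) * e ^ (n + 1) + (b * e) * e ^ n := by
        rw [← mul_assoc, ← mul_assoc, rel, hx]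
    _ = f * (e * e ^ (n + 1)) + a * e ^ (n + 1) + b * (e * e ^ n) := by
        rw [add_mul, mul_assoc f, mul_assoc b]
    _ = f * e ^ (n + 1 + 1) + (a + b) * e ^ (n + 1) := by
        rw [← pow_succ', ← pow_succ', add_mul]; abel

lemma shift_sum_step (c : k[X]) (s : k) (n : ℕ) :
    c + (∑ j ∈ Finset.range (n + 1), c.comp (X + C (s * j))).comp (X + C s)
      = ∑ j ∈ Finset.range (n + 1 + 1), c.comp (X + C (s * j)) := by
  have hc1 : (∑ j ∈ Finset.range (n + 1), c.comp (X + C (s * j))).comp ((X : k[X]) + C s)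
      = ∑ j ∈ Finset.range (n + 1), c.comp (X + C (s * j + s)) := by
    rw [comp_eq_aeval, map_sum]
    refine Finset.sum_congr rfl fun j _ => ?_
    rw [← comp_eq_aeval, Polynomial.comp_assoc]
    congr 1
    simp [add_comp, add_assoc, ← C_add, add_comm]
  rw [hc1, Finset.sum_range_succ' (fun j => c.comp (X + C (s * (j : k)))) (n + 1)]
  push_cast
  ring_nf
  simp [mul_add, add_comm, mul_comm]

lemma epow_comm_f {h e f : A} (p : ℕ) [CharP k p] (hp : 0 < p)
    (c : k[X]) (hdeg : c.degree < (p - 1 : ℕ))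
    (rel1 : h * e - e * h = e) (rel3 : e * f - f * e = aeval h c) :
    e ^ p * f = f * e ^ p := by
  have F1 : e * f = f * e + aeval h c := by
    rw [sub_eq_iff_eq_add.mp rel3]; exact add_comm _ _
  have claim : ∀ n, e ^ (n + 1) * f
      = f * e ^ (n + 1) + aeval h (∑ j ∈ Finset.range (n + 1), c.comp (X + C ((-1 : k) * j))) * e ^ n := by
    intro n
    induction n with
    | zero =>
      have hT0 : (∑ j ∈ Finset.range 1, c.comp (X + C ((-1 : k) * j))) = c := by simp
      rw [hT0, pow_one, pow_zero, mul_one, F1]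
    | succ n ih =>
      have F2 := e_mul_aeval rel1
        (∑ j ∈ Finset.range (n + 1), c.comp (X + C ((-1 : k) * j)))
      have := comm_step F1 F2 n ih
      rw [this, ← map_add]
      congr 2
      have hs := shift_sum_step c (-1 : k) n
      rw [← hs]
      congr 1
      simp [sub_eq_add_neg]
  obtain ⟨m, rfl⟩ : ∃ m, p = m + 1 := ⟨p - 1, by omega⟩
  have hT0 : (∑ j ∈ Finset.range (m + 1), c.comp (X + C ((-1 : k) * j))) = 0 := by
    refine aux_sum_comp (m + 1) hp c hdeg (fun j => (-1 : k) * j) fun t ht => ?_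
    have : ∀ j ∈ Finset.range (m + 1), ((-1 : k) * j) ^ t = (-1 : k) ^ t * (j : k) ^ t :=
      fun j _ => mul_pow _ _ _
    rw [Finset.sum_congr rfl this, ← Finset.mul_sum, aux_powsum (m + 1) hp ht, mul_zero]
  rw [claim m, hT0, map_zero, zero_mul, add_zero]

lemma fpow_comm_e {h e f : A} (p : ℕ) [CharP k p] (hp : 0 < p)
    (c : k[X]) (hdeg : c.degree < (p - 1 : ℕ))
    (rel2 : h * f - f * h = -f) (rel3 : e * f - f * e = aeval h c) :
    f ^ p * e = e * f ^ p := by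
  have F1 : f * e = e * f + -aeval h c := by rw [← rel3]; abel
  have claim : ∀ n, f ^ (n + 1) * e
      = e * f ^ (n + 1) + (-aeval h (∑ j ∈ Finset.range (n + 1), c.comp (X + C ((1 : k) * j)))) * f ^ n := by
    intro n
    induction n with
    | zero =>
      have hT0 : (∑ j ∈ Finset.range 1, c.comp (X + C ((1 : k) * j))) = c := by simp
      rw [hT0, pow_one, pow_zero, mul_one, F1]
    | succ n ih =>
      have F2' := f_mul_aeval rel2
        (∑ j ∈ Finset.range (n + 1), c.comp (X + C ((1 : k) * j)))
      have F2 : f * (-aeval h (∑ j ∈ Finset.range (n + 1), c.comp (X + C ((1 : k) * j))))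
          = (-aeval h ((∑ j ∈ Finset.range (n + 1), c.comp (X + C ((1 : k) * j))).comp (X + C 1))) * f := by
        rw [mul_neg, F2', neg_mul]
      have := comm_step F1 F2 n ih
      rw [this, ← neg_add, ← map_add, shift_sum_step c (1 : k) n]
  obtain ⟨m, rfl⟩ : ∃ m, p = m + 1 := ⟨p - 1, by omega⟩
  have hT0 : (∑ j ∈ Finset.range (m + 1), c.comp (X + C ((1 : k) * j))) = 0 := by
    refine aux_sum_comp (m + 1) hp c hdeg (fun j => (1 : k) * j) fun t ht => ?_
    simp only [one_mul]
    exact aux_powsum (m + 1) hp ht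
  rw [claim m, hT0, map_zero, neg_zero, zero_mul, add_zero]

end alg

/-- Let `k` be a field of characteristic `p > 0`, `c ∈ k[X]` with
`deg c < p - 1`, and `A` an associative unital `k`-algebra containing `h, e, f` with
`he - eh = e`, `hf - fh = -f`, `ef - fe = c(h)`.  Then `h^p - h`, `e^p` and `f^p`
commute with each of `h`, `e`, `f`. -/
theorem stmt_15 {k : Type*} [Field k] (p : ℕ) [CharP k p] (hp : 0 < p)
    (c : Polynomial k) (hdeg : c.degree < (p - 1 : ℕ))
    {A : Type*} [Ring A] [Algebra k A] (h e f : A)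
    (rel1 : h * e - e * h = e) (rel2 : h * f - f * h = -f)
    (rel3 : e * f - f * e = Polynomial.aeval h c) :
    (Commute (h ^ p - h) h ∧ Commute (h ^ p - h) e ∧ Commute (h ^ p - h) f) ∧
    (Commute (e ^ p) h ∧ Commute (e ^ p) e ∧ Commute (e ^ p) f) ∧
    (Commute (f ^ p) h ∧ Commute (f ^ p) e ∧ Commute (f ^ p) f) := by
  have hprime : p.Prime := (CharP.char_is_prime_or_zero k p).resolve_right (by omega)
  haveI : Fact p.Prime := ⟨hprime⟩
  haveI : CharP k[X] p := charP_of_injective_algebraMap' (A := k[X]) k p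
  have hx1 : ((X : k[X]) + 1) ^ p = X ^ p + 1 := by
    rw [add_pow_char, one_pow]
  have hx2 : ((X : k[X]) - 1) ^ p = X ^ p - 1 := by
    rw [sub_pow_char, one_pow]
  have h1p : (h + 1 : A) ^ p = h ^ p + 1 := by
    have := congrArg (aeval h) hx1
    simpa using this
  have hm1p : (h - 1 : A) ^ p = h ^ p - 1 := by
    have := congrArg (aeval h) hx2
    simpa using this
  have pA : ((p : ℕ) : A) = 0 := by
    rw [← map_natCast (algebraMap k A) p, CharP.cast_eq_zero, map_zero]
  refine ⟨⟨((Commute.refl h).pow_left p).sub_left (Commute.refl h), ?_, ?_⟩,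
    ⟨?_, (Commute.refl e).pow_left p, ?_⟩,
    ⟨?_, ?_, (Commute.refl f).pow_left p⟩⟩
  · show (h ^ p - h) * e = e * (h ^ p - h)
    rw [sub_mul, hpow_e rel1 p, he_shift rel1, h1p]
    noncomm_ring
  · show (h ^ p - h) * f = f * (h ^ p - h)
    rw [sub_mul, hpow_f rel2 p, hf_shift rel2, hm1p]
    noncomm_ring
  · show e ^ p * h = h * e ^ p
    rw [en_h rel1 p, pA, sub_zero]
  · show e ^ p * f = f * e ^ p
    exact epow_comm_f p hp c hdeg rel1 rel3
  · show f ^ p * h = h * f ^ p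
    rw [fn_h rel2 p, pA, add_zero]
  · show f ^ p * e = e * f ^ p
    exact fpow_comm_e p hp c hdeg rel2 rel3
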